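/- Let T be a finite tree (a connected acyclic simple graph). Then the rank over ℝ of the adjacency matrix of T equals twice the matching number of T, i.e., r(T) = 2·β(T). -/

import Mathlib

attribute [local instance] Classical.propDecidable

open Matrix

section RankTreeAux

universe u

/-- The set of cardinalities of matchings of `G`. -/
private def mset {V : Type u} (G : SimpleGraph V) : Set ℕ :=
  {k : ℕ | ∃ M : Finset (Sym2 V), ↑M ⊆ G.edgeSet ∧
    (∀ e ∈ M, ∀ f ∈ M, e ≠ f → ∀ w : V, ¬(w ∈ e ∧ w ∈ f)) ∧ M.card = k}

private lemma finrank_submodule_prod {R M N : Type*} [Field R] [AddCommGroup M] [AddCommGroup N]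
    [Module R M] [Module R N] [FiniteDimensional R M] [FiniteDimensional R N]
    (p : Submodule R M) (q : Submodule R N) :
    Module.finrank R (p.prod q) = Module.finrank R p + Module.finrank R q := by
  let e : (p.prod q) ≃ₗ[R] p × q :=
    { toFun := fun x => (⟨x.1.1, x.2.1⟩, ⟨x.1.2, x.2.2⟩)
      invFun := fun y => ⟨(y.1.1, y.2.1), ⟨y.1.2, y.2.2⟩⟩
      map_add' := fun _ _ => rfl
      map_smul' := fun _ _ => rfl
      left_inv := fun _ => rfl
      right_inv := fun _ => rfl }
  rw [e.finrank_eq, Module.finrank_prod]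

private lemma range_prodMap' {R M M₂ M₃ M₄ : Type*} [Field R] [AddCommGroup M] [AddCommGroup M₂]
    [AddCommGroup M₃] [AddCommGroup M₄] [Module R M] [Module R M₂] [Module R M₃] [Module R M₄]
    (f : M →ₗ[R] M₃) (g : M₂ →ₗ[R] M₄) :
    LinearMap.range (f.prodMap g) = (LinearMap.range f).prod (LinearMap.range g) := by
  ext ⟨x, y⟩
  simp only [LinearMap.mem_range, Submodule.mem_prod, LinearMap.prodMap_apply, Prod.mk.injEq,
    Prod.exists]
  constructor
  · rintro ⟨a, b, h1, h2⟩; exact ⟨⟨a, h1⟩, ⟨b, h2⟩⟩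
  · rintro ⟨⟨a, ha⟩, ⟨b, hb⟩⟩; exact ⟨a, b, ha, hb⟩

private lemma rank_fromBlocks_zero {R : Type*} [Field R] {m n : Type*} [Fintype m] [Fintype n]
    [DecidableEq m] [DecidableEq n] (A : Matrix m m R) (D : Matrix n n R) :
    (Matrix.fromBlocks A 0 0 D).rank = A.rank + D.rank := by
  let e := LinearEquiv.sumArrowLequivProdArrow m n R R
  have key : (Matrix.fromBlocks A 0 0 D).mulVecLin
      = (e.symm.toLinearMap) ∘ₗ ((A.mulVecLin).prodMap (D.mulVecLin)) ∘ₗ e.toLinearMap := by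
    apply LinearMap.ext; intro x
    funext i
    cases i <;>
      simp [e, Matrix.fromBlocks_mulVec, LinearEquiv.sumArrowLequivProdArrow,
        Equiv.sumArrowEquivProdArrow]
  have h2 : LinearMap.range ((A.mulVecLin.prodMap D.mulVecLin) ∘ₗ e.toLinearMap)
      = LinearMap.range (A.mulVecLin.prodMap D.mulVecLin) :=
    LinearMap.range_comp_of_range_eq_top _ (LinearMap.range_eq_top.mpr e.surjective)
  rw [Matrix.rank, key, LinearMap.range_comp, h2, LinearEquiv.finrank_map_eq,
    range_prodMap', finrank_submodule_prod, Matrix.rank, Matrix.rank]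

private lemma rank_fromBlocks_inv₁₁ {R : Type*} [Field R] {m n : Type*} [Fintype m] [Fintype n]
    [DecidableEq m] [DecidableEq n]
    (A : Matrix m m R) (B : Matrix m n R) (C : Matrix n m R) (D : Matrix n n R) [Invertible A] :
    (Matrix.fromBlocks A B C D).rank = A.rank + (D - C * ⅟A * B).rank := by
  rw [Matrix.fromBlocks_eq_of_invertible₁₁ A B C D]
  have hU : IsUnit (Matrix.fromBlocks (1 : Matrix m m R) (⅟A * B) 0 (1 : Matrix n n R)).det := by
    rw [Matrix.det_fromBlocks_zero₂₁]; simp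
  have hL : IsUnit (Matrix.fromBlocks (1 : Matrix m m R) 0 (C * ⅟A) (1 : Matrix n n R)).det := by
    rw [Matrix.det_fromBlocks_zero₁₂]; simp
  rw [Matrix.rank_mul_eq_left_of_isUnit_det _ _ hU,
    Matrix.rank_mul_eq_right_of_isUnit_det _ _ hL, rank_fromBlocks_zero]

private lemma rank_step {V : Type u} [Fintype V] [DecidableEq V] (G : SimpleGraph V)
    [DecidableRel G.Adj] {a b : V} (hab : G.Adj a b) (hleaf : ∀ w, G.Adj a w → w = b) :
    (G.adjMatrix ℝ).rank
      = 2 + ((G.adjMatrix ℝ).submatrix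
          (fun x : {x : V // x ≠ a ∧ x ≠ b} => x.1) (fun x : {x : V // x ≠ a ∧ x ≠ b} => x.1)).rank := by
  have hne : a ≠ b := hab.ne
  set A := G.adjMatrix ℝ with hA
  set pt : Bool → V := fun t => if t then a else b with hpt
  let E : (Bool ⊕ {x : V // x ≠ a ∧ x ≠ b}) ≃ V :=
    { toFun := Sum.elim pt Subtype.val
      invFun := fun x => if h : x = a then Sum.inl true else if h' : x = b then Sum.inl false
        else Sum.inr ⟨x, h, h'⟩
      left_inv := by
        rintro (t | ⟨x, hx1, hx2⟩)
        · cases t <;> simp [pt, hne, hne.symm]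
        · simp [hx1, hx2]
      right_inv := by
        intro x
        by_cases h : x = a
        · simp [h, pt]
        · by_cases h' : x = b <;> simp [h, h', pt, hne.symm] }
  set B := A.submatrix pt pt with hB
  set C := A.submatrix pt (fun x : {x : V // x ≠ a ∧ x ≠ b} => x.1) with hC
  set Dm := A.submatrix (fun x : {x : V // x ≠ a ∧ x ≠ b} => x.1) pt with hDm
  set A' := A.submatrix (fun x : {x : V // x ≠ a ∧ x ≠ b} => x.1) (fun x : {x : V // x ≠ a ∧ x ≠ b} => x.1) with hA'
  have hsub : A.submatrix ⇑E ⇑E = Matrix.fromBlocks B C Dm A' := by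
    ext i j
    cases i <;> cases j <;> rfl
  have hBaa : B true true = 0 := by simp [hB, pt, hA]
  have hBbb : B false false = 0 := by simp [hB, pt, hA]
  have hBab : B true false = 1 := by simp [hB, pt, hA, hab]
  have hBba : B false true = 1 := by simp [hB, pt, hA, hab.symm]
  have hBB : B * B = 1 := by
    ext i j
    rw [Matrix.mul_apply, Fintype.sum_bool]
    cases i <;> cases j <;>
      simp [hBaa, hBbb, hBab, hBba, Matrix.one_apply]
  letI : Invertible B := invertibleOfLeftInverse B B hBB
  have hinvB : ⅟B = B := invOf_eq_right_inv hBB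
  have hNa : ∀ w : V, w ≠ b → ¬ G.Adj a w := fun w hw hadj => hw (hleaf w hadj)
  have hCt : ∀ x, C true x = 0 := by
    intro x
    simp only [hC, Matrix.submatrix_apply, hA, pt, if_true]
    simp [SimpleGraph.adjMatrix_apply, hNa x.1 x.2.2]
  have hDt : ∀ w, Dm w true = 0 := by
    intro w
    simp only [hDm, Matrix.submatrix_apply, hA, pt, if_true]
    have : ¬ G.Adj w.1 a := fun h => (hNa w.1 w.2.2) h.symm
    simp [SimpleGraph.adjMatrix_apply, this]
  have hschur : A' - Dm * ⅟B * C = A' := by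
    have : Dm * ⅟B * C = 0 := by
      rw [hinvB]
      ext w x
      rw [Matrix.mul_apply]
      rw [Fintype.sum_bool]
      rw [Matrix.mul_apply, Matrix.mul_apply, Fintype.sum_bool, Fintype.sum_bool]
      simp [hCt, hDt, hBbb]
    rw [this, sub_zero]
  calc A.rank = (A.submatrix ⇑E ⇑E).rank := (Matrix.rank_submatrix A E E).symm
    _ = (Matrix.fromBlocks B C Dm A').rank := by rw [hsub]
    _ = B.rank + (A' - Dm * ⅟B * C).rank := rank_fromBlocks_inv₁₁ B C Dm A'
    _ = 2 + A'.rank := by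
        rw [hschur, Matrix.rank_of_isUnit B (isUnit_of_invertible B)]
        simp

private lemma exists_leaf {V : Type u} [Fintype V] (G : SimpleGraph V) (hG : G.IsAcyclic)
    {x y : V} (hxy : G.Adj x y) :
    ∃ a b, G.Adj a b ∧ ∀ w, G.Adj a w → w = b := by
  classical
  set S : Set ℕ := {n | ∃ (u v : V) (p : G.Walk u v), p.IsPath ∧ p.length = n} with hS
  have hmem1 : 1 ∈ S :=
    ⟨x, y, (SimpleGraph.Path.singleton hxy).1, (SimpleGraph.Path.singleton hxy).2, rfl⟩
  have hbdd : BddAbove S := by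
    refine ⟨Fintype.card V, ?_⟩
    rintro n ⟨u, v, p, hp, rfl⟩
    exact le_of_lt hp.length_lt
  obtain ⟨u, v, p, hp, hlen⟩ := Nat.sSup_mem ⟨1, hmem1⟩ hbdd
  have hlen1 : 1 ≤ p.length := by
    rw [hlen]; exact le_csSup hbdd hmem1
  cases p with
  | nil => simp at hlen1
  | @cons _ c _ h q =>
    refine ⟨u, c, h, ?_⟩
    intro w hw
    by_contra hwc
    rw [SimpleGraph.Walk.cons_isPath_iff] at hp
    by_cases hws : w ∈ q.support
    · have hr : (SimpleGraph.Walk.cons h (q.takeUntil w hws)).IsPath := by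
        rw [SimpleGraph.Walk.cons_isPath_iff]
        exact ⟨hp.1.takeUntil hws,
          fun hu => hp.2 (SimpleGraph.Walk.support_takeUntil_subset _ hws hu)⟩
      have heq := hG.path_unique ⟨_, hr⟩ (SimpleGraph.Path.singleton hw)
      have hlenq : (SimpleGraph.Walk.cons h (q.takeUntil w hws)).length = 1 := by
        rw [congrArg (fun (p : G.Path u w) => p.1.length) heq]
        rfl
      simp only [SimpleGraph.Walk.length_cons, Nat.add_eq_right, add_eq_right] at hlenq
      have : c = w := SimpleGraph.Walk.eq_of_length_eq_zero hlenq
      exact hwc this.symm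
    · have hws' : w ∉ (SimpleGraph.Walk.cons h q).support := by
        rw [SimpleGraph.Walk.support_cons, List.mem_cons]
        rintro (h' | h')
        · exact hw.ne' h'
        · exact hws h'
      have hp' : (SimpleGraph.Walk.cons hw.symm (SimpleGraph.Walk.cons h q)).IsPath := by
        rw [SimpleGraph.Walk.cons_isPath_iff]
        refine ⟨?_, hws'⟩
        rw [SimpleGraph.Walk.cons_isPath_iff]; exact hp
      have hmem : (SimpleGraph.Walk.cons h q).length + 1 ∈ S :=
        ⟨w, v, _, hp', by simp⟩
      have := le_csSup hbdd hmem
      rw [← hlen] at this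
      simp at this

private lemma no_edge_case {V : Type u} [Fintype V] (G : SimpleGraph V) [DecidableRel G.Adj]
    (h : ∀ a b : V, ¬ G.Adj a b) :
    IsGreatest (mset G) 0 ∧ (G.adjMatrix ℝ).rank = 0 := by
  constructor
  · constructor
    · exact ⟨∅, by simp, by simp, rfl⟩
    · rintro k ⟨M, hM, -, rfl⟩
      have hME : M = ∅ := by
        refine Finset.eq_empty_of_forall_notMem fun e he => ?_
        exact Sym2.ind (fun u v (huv : s(u,v) ∈ G.edgeSet) =>
          h u v ((SimpleGraph.mem_edgeSet G).mp huv)) e (hM (Finset.mem_coe.mpr he))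
      simp [hME]
  · have hz : G.adjMatrix ℝ = 0 := by
      ext a b; simp [h a b]
    rw [hz, Matrix.rank_zero]

private lemma key (n : ℕ) : ∀ (V : Type u) [Fintype V] (G : SimpleGraph V) [DecidableRel G.Adj],
    Fintype.card V ≤ n → G.IsAcyclic →
    ∃ m : ℕ, IsGreatest (mset G) m ∧ (G.adjMatrix ℝ).rank = 2 * m := by
  induction n with
  | zero =>
    intro V _ G _ hcard _
    have hV : IsEmpty V := by
      rwa [Nat.le_zero, Fintype.card_eq_zero_iff] at hcard
    obtain ⟨h1, h2⟩ := no_edge_case G (fun a b _ => hV.elim a)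
    exact ⟨0, h1, by simp [h2]⟩
  | succ n IH =>
    intro V _ G _ hcard hG
    classical
    by_cases hE : ∃ x y : V, G.Adj x y
    case neg =>
      push_neg at hE
      obtain ⟨h1, h2⟩ := no_edge_case G hE
      exact ⟨0, h1, by simp [h2]⟩
    obtain ⟨x, y, hxy⟩ := hE
    obtain ⟨a, b, hab, hleaf⟩ := exists_leaf G hG hxy
    set V' := {x : V // x ≠ a ∧ x ≠ b} with hV'
    set G' : SimpleGraph V' := SimpleGraph.comap (fun x : V' => x.1) G with hG'def
    have hG'acyc : G'.IsAcyclic := by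
      intro v c hc
      exact hG _ (hc.map (f := (⟨fun x : V' => x.1, fun h => h⟩ : G' →g G))
        (fun u v h => Subtype.ext (by exact h)))
    have hcard' : Fintype.card V' ≤ n := by
      have : Fintype.card V' < Fintype.card V :=
        Fintype.card_subtype_lt (x := a) (by simp)
      omega
    obtain ⟨m', hg', hrank'⟩ := IH V' G' hcard' hG'acyc
    have hval_inj : Function.Injective (fun x : V' => x.1) := Subtype.val_injective
    have hbmem : ∀ e ∈ G.edgeSet, a ∈ e → b ∈ e := by
      intro e
      induction e using Sym2.ind with
      | _ u v =>
        intro he ha'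
        rw [SimpleGraph.mem_edgeSet] at he
        rw [Sym2.mem_iff] at ha' ⊢
        rcases ha' with rfl | rfl
        · exact Or.inr (hleaf v he).symm
        · exact Or.inl (hleaf u he.symm).symm
    refine ⟨m' + 1, ⟨?_, ?_⟩, ?_⟩
    · -- membership : there is a matching of size m' + 1
      obtain ⟨M', hsub', hdisj', hcard''⟩ := hg'.1
      set Mim := M'.image (Sym2.map (fun x : V' => x.1)) with hMim
      have himNotab : ∀ e ∈ Mim, a ∉ e ∧ b ∉ e := by
        intro e he
        rw [hMim, Finset.mem_image] at he
        obtain ⟨e', -, rfl⟩ := he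
        constructor
        · intro ha'
          obtain ⟨z, -, hz⟩ := Sym2.mem_map.mp ha'
          exact z.2.1 hz
        · intro hb'
          obtain ⟨z, -, hz⟩ := Sym2.mem_map.mp hb'
          exact z.2.2 hz
      have habnotin : s(a, b) ∉ Mim := fun h => (himNotab _ h).1 (Sym2.mem_mk_left a b)
      have hedges : ∀ e' : Sym2 V', e' ∈ G'.edgeSet →
          Sym2.map (fun x : V' => x.1) e' ∈ G.edgeSet := by
        intro e'
        induction e' using Sym2.ind with
        | _ u v =>
          intro he'
          rw [Sym2.map_pair_eq, SimpleGraph.mem_edgeSet]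
          exact (SimpleGraph.mem_edgeSet G').mp he'
      refine ⟨insert s(a, b) Mim, ?_, ?_, ?_⟩
      · intro e he
        rw [Finset.coe_insert, Set.mem_insert_iff] at he
        rcases he with rfl | he
        · exact hab
        · rw [Finset.mem_coe, hMim, Finset.mem_image] at he
          obtain ⟨e', he', rfl⟩ := he
          exact hedges e' (hsub' (Finset.mem_coe.mpr he'))
      · intro e he f hf hef w hw
        rw [Finset.mem_insert] at he hf
        rcases he with rfl | he
        · rcases hf with rfl | hf
          · exact hef rfl
          · rcases Sym2.mem_iff.mp hw.1 with rfl | rfl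
            · exact (himNotab f hf).1 hw.2
            · exact (himNotab f hf).2 hw.2
        · rcases hf with rfl | hf
          · rcases Sym2.mem_iff.mp hw.2 with rfl | rfl
            · exact (himNotab e he).1 hw.1
            · exact (himNotab e he).2 hw.1
          · rw [hMim, Finset.mem_image] at he hf
            obtain ⟨e', he', rfl⟩ := he
            obtain ⟨f', hf', rfl⟩ := hf
            have hne' : e' ≠ f' := fun hh => hef (by rw [hh])
            obtain ⟨z, hz, hzw⟩ := Sym2.mem_map.mp hw.1
            obtain ⟨z', hz', hz'w⟩ := Sym2.mem_map.mp hw.2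
            have hzz : z = z' := hval_inj (hzw.trans hz'w.symm)
            exact hdisj' e' he' f' hf' hne' z ⟨hz, hzz ▸ hz'⟩
      · rw [Finset.card_insert_of_notMem habnotin, hMim,
          Finset.card_image_of_injective _ (Sym2.map.injective hval_inj), hcard'']
    · -- upper bound
      rintro k ⟨M, hsub, hdisj, rfl⟩
      set M₀ := M.filter (fun e => a ∈ e ∨ b ∈ e) with hM₀
      set M₁ := M.filter (fun e => ¬(a ∈ e ∨ b ∈ e)) with hM₁
      have hsplit : M₀.card + M₁.card = M.card :=
        Finset.card_filter_add_card_filter_not _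
      have hM₀le : M₀.card ≤ 1 := by
        rw [Finset.card_le_one]
        intro e he f hf
        by_contra hef
        rw [hM₀, Finset.mem_filter] at he hf
        have hbe : b ∈ e := by
          rcases he.2 with hh | hh
          · exact hbmem e (hsub (Finset.mem_coe.mpr he.1)) hh
          · exact hh
        have hbf : b ∈ f := by
          rcases hf.2 with hh | hh
          · exact hbmem f (hsub (Finset.mem_coe.mpr hf.1)) hh
          · exact hh
        exact hdisj e he.1 f hf.1 hef b ⟨hbe, hbf⟩
      have hM₁le : M₁.card ≤ m' := by
        rcases Finset.eq_empty_or_nonempty M₁ with hemp | ⟨e₀, he₀⟩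
        · simp [hemp]
        · have hnotab : ∀ e ∈ M₁, ∀ w, w ∈ e → w ≠ a ∧ w ≠ b := by
            intro e he w hwe
            rw [hM₁, Finset.mem_filter] at he
            push_neg at he
            exact ⟨fun hh => he.2.1 (hh ▸ hwe), fun hh => he.2.2 (hh ▸ hwe)⟩
          haveI : Nonempty V' := by
            obtain ⟨h1, h2⟩ := hnotab e₀ he₀ e₀.out.1 (Sym2.out_fst_mem e₀)
            exact ⟨⟨_, h1, h2⟩⟩
          set g : V → V' := fun x => if h : x ≠ a ∧ x ≠ b then ⟨x, h⟩
            else Classical.arbitrary V' with hgdef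
          have hgval : ∀ e ∈ M₁, ∀ w ∈ e, ((g w : V') : V) = w := by
            intro e he w hwe
            have := hnotab e he w hwe
            simp [hgdef, this]
          have hback : ∀ e ∈ M₁, Sym2.map (fun x : V' => x.1) (Sym2.map g e) = e := by
            intro e he
            rw [Sym2.map_map]
            calc Sym2.map ((fun x : V' => x.1) ∘ g) e = Sym2.map (fun x => x) e :=
                  Sym2.map_congr (fun x hx => hgval e he x hx)
              _ = e := by rw [Sym2.map_id']; rfl
          have hinj : Set.InjOn (Sym2.map g) M₁ := fun e he f hf h => by
            rw [← hback e (Finset.mem_coe.mp he), ← hback f (Finset.mem_coe.mp hf), h]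
          rw [← Finset.card_image_of_injOn hinj]
          apply hg'.2
          have hedge' : ∀ e, e ∈ M₁ → Sym2.map g e ∈ G'.edgeSet := by
            intro e
            induction e using Sym2.ind with
            | _ u v =>
              intro he
              rw [Sym2.map_pair_eq, SimpleGraph.mem_edgeSet]
              have hu := hgval _ he u (Sym2.mem_mk_left u v)
              have hv := hgval _ he v (Sym2.mem_mk_right u v)
              have hadj : G.Adj u v := (SimpleGraph.mem_edgeSet G).mp
                (hsub (Finset.mem_coe.mpr (Finset.mem_filter.mp he).1))
              show G.Adj (g u).1 (g v).1
              rw [hu, hv]; exact hadj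
          refine ⟨M₁.image (Sym2.map g), ?_, ?_, rfl⟩
          · intro e' he'
            rw [Finset.mem_coe, Finset.mem_image] at he'
            obtain ⟨e, he, rfl⟩ := he'
            exact hedge' e he
          · intro e' he' f' hf' hne w hw
            rw [Finset.mem_image] at he' hf'
            obtain ⟨e, he, rfl⟩ := he'
            obtain ⟨f, hf, rfl⟩ := hf'
            have hef : e ≠ f := fun hh => hne (by rw [hh])
            obtain ⟨z, hz, hzw⟩ := Sym2.mem_map.mp hw.1
            obtain ⟨z', hz', hz'w⟩ := Sym2.mem_map.mp hw.2
            have h1 : (w : V) ∈ e := by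
              rw [← hzw, hgval e he z hz]; exact hz
            have h2 : (w : V) ∈ f := by
              rw [← hz'w, hgval f hf z' hz']; exact hz'
            exact hdisj e (Finset.mem_filter.mp he).1 f (Finset.mem_filter.mp hf).1 hef
              (w : V) ⟨h1, h2⟩
      omega
    · -- rank computation
      have hAsub : G'.adjMatrix ℝ = (G.adjMatrix ℝ).submatrix
          (fun x : V' => x.1) (fun x : V' => x.1) := by
        ext u v
        by_cases h : G.Adj u.1 v.1 <;>
          simp [SimpleGraph.adjMatrix_apply, Matrix.submatrix_apply, hG'def, h]
      rw [rank_step G hab hleaf, ← hAsub, hrank']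
      ring
end RankTreeAux


/-- For a finite tree `T`, the rank of the (real) adjacency matrix is twice the matching
number of `T` (the largest cardinality of a set of pairwise vertex-disjoint edges). -/
theorem rank_tree_eq_two_mul_matchingNumber {V : Type*} [Fintype V] (T : SimpleGraph V)
    (hT : T.IsTree) :
    (T.adjMatrix ℝ).rank =
      2 * sSup {k : ℕ | ∃ M : Finset (Sym2 V), ↑M ⊆ T.edgeSet ∧
        (∀ e ∈ M, ∀ f ∈ M, e ≠ f → ∀ w : V, ¬(w ∈ e ∧ w ∈ f)) ∧ M.card = k} := by
  obtain ⟨m, hg, hr⟩ := key (Fintype.card V) V T le_rfl hT.2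
  rw [hr, show sSup {k : ℕ | ∃ M : Finset (Sym2 V), ↑M ⊆ T.edgeSet ∧
        (∀ e ∈ M, ∀ f ∈ M, e ≠ f → ∀ w : V, ¬(w ∈ e ∧ w ∈ f)) ∧ M.card = k} = m from hg.csSup_eq]
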